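/- Let σ be a noncrossing partition of [n]. Then the relation on {1̃,…,ñ} defining the dual partition is an equivalence relation, the resulting partition σ̃ of {1̃,…,ñ} is again noncrossing, and the number of blocks of σ plus the number of blocks of σ̃ equals n+1. -/

import Mathlib

open Finset

noncomputable section
open scoped Classical

/-- The cyclic (clockwise) half-open interval `(a, b]` in `Fin m`. -/
def cIoc {m : ℕ} (a b : Fin m) : Finset (Fin m) :=
  univ.filter fun k => if a < b then a < k ∧ k ≤ b else a < k ∨ k ≤ b

/-- The open cyclic (clockwise) arc from `a` to `b` in `Fin m`, excluding both endpoints. -/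
def cIoo {m : ℕ} (a b : Fin m) : Finset (Fin m) :=
  univ.filter fun k => if a < b then a < k ∧ k < b else (a < k ∨ k < b) ∧ k ≠ a ∧ k ≠ b

/-- Set partitions of `[n] = Fin n`. -/
abbrev NCP (n : ℕ) := Finpartition (univ : Finset (Fin n))

/-- `a` and `b` lie in the same block of `σ`. -/
def sameBlock {n : ℕ} (σ : NCP n) (a b : Fin n) : Prop :=
  ∃ B ∈ σ.parts, a ∈ B ∧ b ∈ B

/-- `σ` is a noncrossing partition: there are no `a < b < c < d` with `a, c` in one
block and `b, d` in a different block. -/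
def IsNoncrossing {n : ℕ} (σ : NCP n) : Prop :=
  ∀ a b c d : Fin n, a < b → b < c → c < d →
    sameBlock σ a c → sameBlock σ b d → sameBlock σ a b

/-- The relation defining the dual (Kreweras complement) partition: `ĩ ~ j̃` iff no block
of `σ` meets both cyclic intervals `{(i+1), …, j}` and `{(j+1), …, i}`. -/
def dualRel {n : ℕ} (σ : NCP n) (i j : Fin n) : Prop :=
  i = j ∨ ¬ ∃ B ∈ σ.parts, (B ∩ cIoc i j).Nonempty ∧ (B ∩ cIoc j i).Nonempty

/-- The point `ī` of `[2n]` (0-based: `ī = 2i`). -/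
def bar {n : ℕ} (i : Fin n) : Fin (2*n) := ⟨2*(i:ℕ), by have := i.isLt; omega⟩

/-- The point `ĩ` of `[2n]` (0-based: `ĩ = 2i+1`). -/
def til {n : ℕ} (i : Fin n) : Fin (2*n) := ⟨2*(i:ℕ)+1, by have := i.isLt; omega⟩

/-- A matching (fixed-point-free involution) of `Fin m`. -/
def IsMatching {m : ℕ} (τ : Fin m → Fin m) : Prop :=
  Function.Involutive τ ∧ ∀ i, τ i ≠ i

/-- A noncrossing matching: there are no `a < b < c < d` with `τ a = c` and `τ b = d`. -/
def IsNCMatching {m : ℕ} (τ : Fin m → Fin m) : Prop :=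
  ¬ ∃ a b c d : Fin m, a < b ∧ b < c ∧ c < d ∧ τ a = c ∧ τ b = d

/-- `j` is the cyclic predecessor of `i` in the block of `σ` containing `i`
(`j = i` when `i` is a singleton). -/
def cyclicPred {n : ℕ} (σ : NCP n) (j i : Fin n) : Prop :=
  ∃ B ∈ σ.parts, i ∈ B ∧ j ∈ B ∧ ∀ x ∈ B, x ∉ cIoo j i

/-- `m` is the medial pairing of `σ`: it pairs `ī` (0-based `2i`) with `j̃` (0-based `2j+1`),
where `j` is the cyclic predecessor of `i` in its block. -/
def IsMedialOf {n : ℕ} (σ : NCP n) (m : Fin (2*n) → Fin (2*n)) : Prop :=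
  ∀ i j : Fin n, m (bar i) = til j ↔ cyclicPred σ j i

/-- The crossing number of a matching: the number of pairs `{a,b}` with
`a < b < τ a < τ b`. -/
def crossNum {m : ℕ} (τ : Fin m → Fin m) : ℕ :=
  ((univ : Finset (Fin m × Fin m)).filter fun p =>
    p.1 < p.2 ∧ p.2 < τ p.1 ∧ τ p.1 < τ p.2).card

/-- `a`, `b`, `c`, `d` are distinct and in cyclic order on `Fin m`. -/
def CyclicOrder4 {m : ℕ} (a b c d : Fin m) : Prop :=
  (a < b ∧ b < c ∧ c < d) ∨ (b < c ∧ c < d ∧ d < a) ∨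
  (c < d ∧ d < a ∧ a < b) ∨ (d < a ∧ a < b ∧ b < c)

/-- `τ` covers `τ'` in the uncrossing order. -/
def UncrossCover {m : ℕ} (τ' τ : Fin m → Fin m) : Prop :=
  IsMatching τ' ∧ IsMatching τ ∧
  ∃ a b c d : Fin m, CyclicOrder4 a b c d ∧ τ a = c ∧ τ b = d ∧
    (∀ x, x ≠ a → x ≠ b → x ≠ c → x ≠ d → τ' x = τ x) ∧
    ((τ' a = d ∧ τ' b = c ∧ ∀ x ∈ cIoo a b, τ x ∉ cIoo c d) ∨
     (τ' a = b ∧ τ' c = d ∧ ∀ x ∈ cIoo b c, τ x ∉ cIoo d a))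

/-- The uncrossing partial order on matchings: reflexive-transitive closure of covers. -/
def uncrossLE {m : ℕ} (τ' τ : Fin m → Fin m) : Prop :=
  Relation.ReflTransGen UncrossCover τ' τ

/-- An affine permutation of period `m`. -/
def IsAffinePerm (m : ℕ) (f : ℤ → ℤ) : Prop :=
  Function.Bijective f ∧ ∀ i : ℤ, f (i + m) = f i + m

/-- The length of an affine permutation of period `m`:
`#{(i,j) : 1 ≤ i ≤ m, i < j, f i > f j}`. -/
def affLen (m : ℕ) (f : ℤ → ℤ) : ℕ :=
  Set.ncard {p : ℤ × ℤ | 1 ≤ p.1 ∧ p.1 ≤ (m:ℤ) ∧ p.1 < p.2 ∧ f p.2 < f p.1}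

/-- The affine rank matrix `r_f(i,j) = #{a ≤ i : f a ≥ j}`. -/
def rankMat (f : ℤ → ℤ) (i j : ℤ) : ℕ :=
  Set.ncard {a : ℤ | a ≤ i ∧ j ≤ f a}

/-- Affine Bruhat order via rank matrices. -/
def bruhatLE (f g : ℤ → ℤ) : Prop := ∀ i j : ℤ, rankMat f i j ≤ rankMat g i j

/-- The sum `Σ_{i=1}^m (f i − i)`. -/
def windowSum (m : ℕ) (f : ℤ → ℤ) : ℤ :=
  ∑ i ∈ Finset.range m, (f ((i:ℤ)+1) - ((i:ℤ)+1))

/-- The affine permutation `g_τ` associated to a matching `τ` of `[2n]`: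
on `[2n]`, `g_τ i = τ i` if `τ i > i` and `g_τ i = τ i + 2n` if `τ i < i`,
extended periodically. -/
def gTau (n : ℕ) (τ : Fin (2*n) → Fin (2*n)) (i : ℤ) : ℤ :=
  if h : (i % ((2*n : ℕ) : ℤ)).toNat < 2*n then
    let r : Fin (2*n) := ⟨(i % ((2*n : ℕ) : ℤ)).toNat, h⟩
    (i - i % ((2*n : ℕ) : ℤ)) +
      (if r < τ r then ((τ r : ℕ) : ℤ) else ((τ r : ℕ) : ℤ) + 2*n)
  else i

/-- `f_τ = g_τ − 1`. -/
def fTau (n : ℕ) (τ : Fin (2*n) → Fin (2*n)) (i : ℤ) : ℤ := gTau n τ i - 1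

/-- An electrical affine permutation for `n`. -/
def IsElectrical (n : ℕ) (f : ℤ → ℤ) : Prop :=
  IsAffinePerm (2*n) f ∧
  (∀ i : ℤ, i ≤ f i ∧ f i ≤ i + 2*n - 2) ∧
  windowSum (2*n) f = ((n:ℤ) - 1) * (2*n) ∧
  ∀ i : ℤ, (f (f i + 1) - (i - 1)) % ((2*n : ℕ) : ℤ) = 0

/-- The Grassmann necklace subset `I_a(f) ⊆ [m]`: representatives in `[m]` (0-based) of
`{f b mod m : b < a and f b ≥ a}`. -/
def necklaceI (m : ℕ) (f : ℤ → ℤ) (a : ℤ) : Finset (Fin m) :=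
  univ.filter fun x => ∃ b : ℤ, b < a ∧ a ≤ f b ∧ f b % (m:ℤ) = ((x:ℕ):ℤ)

/-- The dual necklace subset `J_a(f) ⊆ [m]`: representatives in `[m]` (0-based) of
`{b mod m : b < a and f b ≥ a}`. -/
def necklaceJ (m : ℕ) (f : ℤ → ℤ) (a : ℤ) : Finset (Fin m) :=
  univ.filter fun x => ∃ b : ℤ, b < a ∧ a ≤ f b ∧ b % (m:ℤ) = ((x:ℕ):ℤ)

/-- Dominance order on `k`-element subsets of `Fin m`:
the `r`-th smallest element of `I` is at most the `r`-th smallest element of `J`. -/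
def domLE {m : ℕ} (k : ℕ) (I J : Finset (Fin m)) : Prop :=
  ∃ (hI : I.card = k) (hJ : J.card = k),
    ∀ r : Fin k, I.orderEmbOfFin hI r ≤ J.orderEmbOfFin hJ r

/-- `a`-shifted dominance order: rotate so that `a` becomes least, then compare. -/
def sdomLE {m : ℕ} (k : ℕ) (a : Fin m) (I J : Finset (Fin m)) : Prop :=
  domLE k (I.image (· - a)) (J.image (· - a))

/-- `a`-shifted lexicographic order on subsets of `Fin m`. -/
def lexLE {m : ℕ} (a : Fin m) (I J : Finset (Fin m)) : Prop :=
  I = J ∨ List.Lex (· < ·) ((I.image (· - a)).sort (· ≤ ·)) ((J.image (· - a)).sort (· ≤ ·))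

/-- A Catalan subset of `[2n]` (0-based): an `(n−1)`-subset such that the length-`2n`
word with `U` at positions `{0} ∪ {x+1 : x ∈ I}` and `D` elsewhere is a Dyck path. -/
def IsCatalan {n : ℕ} (I : Finset (Fin (2*n))) : Prop :=
  I.card = n - 1 ∧
  ∀ p : ℕ, p ≤ 2*n →
    p ≤ 2 * ((insert 0 (I.image fun x => (x:ℕ)+1)).filter (· < p)).card

/-- Catalan subset with respect to the shifted order `≤_a`. -/
def IsCatalanAt {n : ℕ} (a : Fin (2*n)) (I : Finset (Fin (2*n))) : Prop :=
  IsCatalan (I.image (· - a))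

/-- The set of maxima of `S` with respect to the `a`-shifted order. -/
def maxAt {m : ℕ} (a : Fin m) (S : Finset (Fin m)) : Finset (Fin m) :=
  S.filter fun x => ∀ y ∈ S, y - a ≤ x - a

/-- `I_a(σ)` for a noncrossing partition `σ`: the complement in `[2n]` of the set of
`≤_a`-maxima of the blocks of `σ` (embedded by `bar`) and of the blocks of the dual
partition `σ̃` (embedded by `til`). -/
def IaP {n : ℕ} (σ : NCP n) (a : Fin (2*n)) : Finset (Fin (2*n)) :=
  univ \ ((σ.parts.biUnion fun B => maxAt a (B.image bar)) ∪
          ((univ : Finset (Fin n)).biUnion fun i =>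
            maxAt a ((univ.filter (dualRel σ i)).image til)))

/-- `I` is concordant with `σ`: `I` has `n−1` elements and every block of `σ` and of
its dual `σ̃` contains exactly one element of `[2n] ∖ I`. -/
def Concordant {n : ℕ} (σ : NCP n) (I : Finset (Fin (2*n))) : Prop :=
  I.card = n - 1 ∧
  (∀ B ∈ σ.parts, ((B.image bar) ∩ (univ \ I)).card = 1) ∧
  (∀ i : Fin n, (((univ.filter (dualRel σ i)).image til) ∩ (univ \ I)).card = 1)

/-- `E(I)`: the set of noncrossing partitions concordant with `I`. -/
def ESet {n : ℕ} (I : Finset (Fin (2*n))) : Set (NCP n) :=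
  {σ | IsNoncrossing σ ∧ Concordant σ I}

/-- The maximal minor `Δ_I(X)` on the columns indexed by `I`, in increasing order. -/
def minorOn {k m : ℕ} (X : Matrix (Fin k) (Fin m) ℝ) (I : Finset (Fin m)) : ℝ :=
  if h : I.card = k then (X.submatrix id fun r => I.orderEmbOfFin h r).det else 0

/-- `X` is totally nonnegative: it has full rank `k` and all maximal minors are `≥ 0`. -/
def IsTNN {k m : ℕ} (X : Matrix (Fin k) (Fin m) ℝ) : Prop :=
  X.rank = k ∧ ∀ I : Finset (Fin m), I.card = k → 0 ≤ minorOn X I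

/-- `t` times the matrix unit `E_{p,q}` (0-based indices). -/
def matE (m : ℕ) (p q : ℕ) (t : ℝ) : Matrix (Fin m) (Fin m) ℝ :=
  Matrix.of fun r s => if (r:ℕ) = p ∧ (s:ℕ) = q then t else 0

/-- `x_i(t) = Id + t·E_{i,i+1}` (1-based index `i`). -/
def xB (m i : ℕ) (t : ℝ) : Matrix (Fin m) (Fin m) ℝ := 1 + matE m (i-1) i t

/-- `y_i(t) = Id + t·E_{i+1,i}` (1-based index `i`). -/
def yB (m i : ℕ) (t : ℝ) : Matrix (Fin m) (Fin m) ℝ := 1 + matE m i (i-1) t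

/-- `u_i(t) = x_i(t)·y_{i−1}(t)` (1-based index `i`). -/
def uB (m i : ℕ) (t : ℝ) : Matrix (Fin m) (Fin m) ℝ := xB m i t * yB m (i-1) t

/-- The columns of `X`, extended `n`-periodically to all integer indices (0-based). -/
def colP {k n : ℕ} (X : Matrix (Fin k) (Fin n) ℝ) (i : ℤ) : Fin k → ℝ :=
  fun r => if h : (i % (n:ℤ)).toNat < n then X r ⟨(i % (n:ℤ)).toNat, h⟩ else 0

/-- `f_X(i) = min { j ≥ i : v_i ∈ span(v_{i+1}, …, v_j) }` (0-based columns). -/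
def fX {k n : ℕ} (X : Matrix (Fin k) (Fin n) ℝ) (i : ℤ) : ℤ :=
  sInf {j : ℤ | i ≤ j ∧ colP X i ∈ Submodule.span ℝ (colP X '' Set.Ioc i j)}

/-- Fintype instance for finite partitions of a finite set. -/
instance {α : Type*} [DecidableEq α] [Fintype α] (s : Finset α) : Fintype (Finpartition s) :=
  Fintype.ofInjective Finpartition.parts fun _ _ h => Finpartition.ext h

/-- The sorted list of (the values of) a subset of `Fin m`. -/
def sortedL {m : ℕ} (I : Finset (Fin m)) : List ℕ :=
  (I.sort (· ≤ ·)).map Fin.val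

/-- The number of inversions of a list (= the number of adjacent transpositions
needed to sort it, when entries are distinct). -/
def invNum (l : List ℕ) : ℕ :=
  ((Finset.range l.length ×ˢ Finset.range l.length).filter fun pq =>
    pq.1 < pq.2 ∧ l.getD pq.2 0 < l.getD pq.1 0).card

/-- The subset of `Fin m` whose values lie in the list `l`. -/
def toFinF {m : ℕ} (l : List ℕ) : Finset (Fin m) :=
  univ.filter fun x => (x:ℕ) ∈ l

/-- The double sum `Σ_{σ ∈ E(l), κ ∈ E(l')} L σ · L κ`, where `E` of a list with a
repeated entry (or an out-of-range entry) is empty. -/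
def pairSum {n : ℕ} (L : NCP n → ℝ) (l l' : List ℕ) : ℝ :=
  if (l.Nodup ∧ ∀ x ∈ l, x < 2*n) ∧ (l'.Nodup ∧ ∀ x ∈ l', x < 2*n) then
    ∑ᶠ σ ∈ ESet (n := n) (toFinF l), ∑ᶠ κ ∈ ESet (n := n) (toFinF l'), L σ * L κ
  else 0

/-- The list obtained from `LI` by replacing its entries at the positions in `S`
(in increasing order of position) by the first `#S` entries of `LJ`. -/
def swapI (LI LJ : List ℕ) (S : Finset ℕ) : List ℕ :=
  (List.range LI.length).map fun p =>
    if p ∈ S then LJ.getD ((S.filter (· < p)).card) 0 else LI.getD p 0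

/-- The list obtained from `LJ` by replacing its first `#S` entries by the entries of
`LI` at the positions in `S`, in increasing order. -/
def swapJ (LI LJ : List ℕ) (S : Finset ℕ) : List ℕ :=
  (List.range LJ.length).map fun p =>
    if p < S.card then LI.getD ((S.sort (· ≤ ·)).getD p 0) 0 else LJ.getD p 0

lemma mem_cIoc' {n : ℕ} {a b x : Fin n} :
    x ∈ cIoc a b ↔ (((a:ℕ) < b ∧ (a:ℕ) < x ∧ (x:ℕ) ≤ b) ∨
      (¬((a:ℕ) < b) ∧ ((a:ℕ) < x ∨ (x:ℕ) ≤ b))) := by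
  simp only [cIoc, mem_filter, mem_univ, true_and, Fin.lt_def, Fin.le_def]
  split_ifs with h
  · tauto
  · tauto

variable {n : ℕ}

lemma sameBlock_refl (σ : NCP n) (x : Fin n) : sameBlock σ x x := by
  obtain ⟨B, hB, hx⟩ := σ.exists_mem (mem_univ x)
  exact ⟨B, hB, hx, hx⟩

lemma sameBlock_symm {σ : NCP n} {x y : Fin n} (h : sameBlock σ x y) : sameBlock σ y x := by
  obtain ⟨B, hB, hx, hy⟩ := h; exact ⟨B, hB, hy, hx⟩

lemma mem_of_sameBlock {σ : NCP n} {B : Finset (Fin n)} {x y : Fin n}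
    (hB : B ∈ σ.parts) (hx : x ∈ B) (h : sameBlock σ x y) : y ∈ B := by
  obtain ⟨C, hC, hx', hy'⟩ := h
  rwa [σ.eq_of_mem_parts hB hC hx hx']

lemma sameBlock_trans {σ : NCP n} {x y z : Fin n} (h : sameBlock σ x y)
    (h' : sameBlock σ y z) : sameBlock σ x z := by
  obtain ⟨B, hB, hx, hy⟩ := h
  exact ⟨B, hB, hx, mem_of_sameBlock hB hy h'⟩

lemma dualRel_refl (σ : NCP n) (i : Fin n) : dualRel σ i i := .inl rfl

lemma dualRel_symm {σ : NCP n} {i j : Fin n} (h : dualRel σ i j) : dualRel σ j i := by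
  rcases h with rfl | h
  · exact .inl rfl
  · exact .inr fun ⟨B, hB, h1, h2⟩ => h ⟨B, hB, h2, h1⟩

lemma not_mem_both {σ : NCP n} {i j : Fin n} (h : dualRel σ i j) {B : Finset (Fin n)}
    (hB : B ∈ σ.parts) {x y : Fin n} (hx : x ∈ B) (hy : y ∈ B) :
    i = j ∨ (x ∉ cIoc i j ∧ y ∉ cIoc i j) ∨ (x ∉ cIoc j i ∧ y ∉ cIoc j i) := by
  rcases h with rfl | h
  · exact .inl rfl
  right
  by_cases hxij : x ∈ cIoc i j
  · right
    constructor
    · intro hxji; exact h ⟨B, hB, ⟨x, mem_inter.2 ⟨hx, hxij⟩⟩, ⟨x, mem_inter.2 ⟨hx, hxji⟩⟩⟩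
    · intro hyji; exact h ⟨B, hB, ⟨x, mem_inter.2 ⟨hx, hxij⟩⟩, ⟨y, mem_inter.2 ⟨hy, hyji⟩⟩⟩
  · by_cases hyij : y ∈ cIoc i j
    · right
      constructor
      · intro hxji; exact h ⟨B, hB, ⟨y, mem_inter.2 ⟨hy, hyij⟩⟩, ⟨x, mem_inter.2 ⟨hx, hxji⟩⟩⟩
      · intro hyji; exact h ⟨B, hB, ⟨y, mem_inter.2 ⟨hy, hyij⟩⟩, ⟨y, mem_inter.2 ⟨hy, hyji⟩⟩⟩
    · exact .inl ⟨hxij, hyij⟩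

lemma dualRel_trans {σ : NCP n} {i j k : Fin n} (hij : dualRel σ i j)
    (hjk : dualRel σ j k) : dualRel σ i k := by
  by_cases hik : i = k
  · exact .inl hik
  right
  rintro ⟨B, hB, ⟨x, hx⟩, ⟨y, hy⟩⟩
  simp only [mem_inter] at hx hy
  obtain ⟨hxB, hxik⟩ := hx
  obtain ⟨hyB, hyki⟩ := hy
  have h1 := not_mem_both hij hB hxB hyB
  have h2 := not_mem_both hjk hB hxB hyB
  have hik' : (i : ℕ) ≠ (k : ℕ) := fun h => hik (Fin.ext h)
  have e1 : ∀ a b : Fin n, (a = b) → (a:ℕ) = b := fun a b h => by rw [h]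
  rcases h1 with rfl | h1
  · rcases h2 with rfl | h2
    · exact hik rfl
    · rw [mem_cIoc'] at *
      rcases h2 with ⟨h2a, h2b⟩ | ⟨h2a, h2b⟩ <;>
        (rw [mem_cIoc'] at *; push_neg at *) <;> omega
  · rcases h2 with rfl | h2
    · rcases h1 with ⟨h1a, h1b⟩ | ⟨h1a, h1b⟩ <;>
        (rw [mem_cIoc'] at *; push_neg at *) <;> omega
    · have hij' : (i : ℕ) ≠ (j : ℕ) := by
        rintro h; rcases h1 with ⟨h1a, _⟩ | ⟨h1a, _⟩ <;> rw [mem_cIoc'] at * <;>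
          push_neg at * <;> omega
      rcases h1 with ⟨h1a, h1b⟩ | ⟨h1a, h1b⟩ <;> rcases h2 with ⟨h2a, h2b⟩ | ⟨h2a, h2b⟩ <;>
        (rw [mem_cIoc'] at hxik hyki h1a h1b h2a h2b; push_neg at h1a h1b h2a h2b) <;>
        omega

lemma dual_noncrossing {σ : NCP n} {a b c d : Fin n} (hab : a < b) (hbc : b < c)
    (hcd : c < d) (hac : dualRel σ a c) (hbd : dualRel σ b d) : dualRel σ a b := by
  right
  rintro ⟨B, hB, ⟨x, hx⟩, ⟨y, hy⟩⟩
  simp only [mem_inter] at hx hy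
  obtain ⟨hxB, hxab⟩ := hx
  obtain ⟨hyB, hyba⟩ := hy
  have h1 := not_mem_both hac hB hxB hyB
  have h2 := not_mem_both hbd hB hxB hyB
  have hab' : (a:ℕ) < b := hab
  have hbc' : (b:ℕ) < c := hbc
  have hcd' : (c:ℕ) < d := hcd
  rcases h1 with h1 | h1
  · exact absurd (Fin.ext_iff.1 h1) (by omega)
  rcases h2 with h2 | h2
  · exact absurd (Fin.ext_iff.1 h2) (by omega)
  rcases h1 with ⟨h1a, h1b⟩ | ⟨h1a, h1b⟩ <;> rcases h2 with ⟨h2a, h2b⟩ | ⟨h2a, h2b⟩ <;>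
    (rw [mem_cIoc'] at hxab hyba h1a h1b h2a h2b; push_neg at h1a h1b h2a h2b) <;> omega

lemma sameBlock_of_noncross {σ : NCP n} (hσ : IsNoncrossing σ) {a b c d : Fin n}
    (h1 : a < b) (h2 : b < c) (h3 : c < d) (hac : sameBlock σ a c)
    (hbd : sameBlock σ b d) : sameBlock σ a b := hσ a b c d h1 h2 h3 hac hbd

/-- four points in cyclic order `p r q s` with `p ~ q`, `r ~ s`, `p ≁ r` is impossible. -/
lemma noCross4 {σ : NCP n} (hσ : IsNoncrossing σ) {p r q s : Fin n}
    (hpq : sameBlock σ p q) (hrs : sameBlock σ r s) (hpr : ¬ sameBlock σ p r)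
    (cyc : ((p < r ∧ r < q ∧ q < s) ∨ (r < q ∧ q < s ∧ s < p) ∨
      (q < s ∧ s < p ∧ p < r) ∨ (s < p ∧ p < r ∧ r < q))) : False := by
  rcases cyc with ⟨h1, h2, h3⟩ | ⟨h1, h2, h3⟩ | ⟨h1, h2, h3⟩ | ⟨h1, h2, h3⟩
  · exact hpr (hσ p r q s h1 h2 h3 hpq hrs)
  · have := hσ r q s p h1 h2 h3 hrs (sameBlock_symm hpq)
    exact hpr (sameBlock_symm (sameBlock_trans this (sameBlock_symm hpq)))
  · have := hσ q s p r h1 h2 h3 (sameBlock_symm hpq) (sameBlock_symm hrs)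
    exact hpr (sameBlock_trans hpq (sameBlock_trans this (sameBlock_symm hrs)))
  · have := hσ s p r q h1 h2 h3 (sameBlock_symm hrs) hpq
    exact hpr (sameBlock_trans (sameBlock_symm this) (sameBlock_symm hrs))

section Merge

variable {σ : NCP n} {B C : Finset (Fin n)}

lemma union_not_mem_erase (hB : B ∈ σ.parts) (hC : C ∈ σ.parts) (hBC : B ≠ C) :
    B ∪ C ∉ (σ.parts.erase B).erase C := by
  intro h
  have h' : B ∪ C ∈ σ.parts := mem_of_mem_erase (mem_of_mem_erase h)
  obtain ⟨x, hx⟩ := σ.nonempty_of_mem_parts hB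
  have h2 : B ∪ C = B := σ.eq_of_mem_parts h' hB (mem_union_left _ hx) hx
  obtain ⟨y, hy⟩ := σ.nonempty_of_mem_parts hC
  have : C = B := σ.eq_of_mem_parts hC hB hy (h2 ▸ mem_union_right _ hy)
  exact hBC this.symm

lemma parts_eq_insert (hB : B ∈ σ.parts) (hC : C ∈ σ.parts) (hBC : B ≠ C) :
    σ.parts = insert B (insert C ((σ.parts.erase B).erase C)) := by
  rw [insert_erase (mem_erase.2 ⟨Ne.symm hBC, hC⟩), insert_erase hB]

def mergeNCP (σ : NCP n) (B C : Finset (Fin n)) (hB : B ∈ σ.parts) (hC : C ∈ σ.parts)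
    (hBC : B ≠ C) : NCP n where
  parts := insert (B ∪ C) ((σ.parts.erase B).erase C)
  supIndep := by
    rw [Finset.supIndep_iff_pairwiseDisjoint, coe_insert]
    apply Set.PairwiseDisjoint.insert
    · exact σ.disjoint.subset (fun D hD => by
        rw [mem_coe] at hD ⊢; exact mem_of_mem_erase (mem_of_mem_erase hD))
    · intro D hD _
      rw [mem_coe, mem_erase, mem_erase] at hD
      obtain ⟨hDC, hDB, hD⟩ := hD
      simp only [id_eq, Finset.disjoint_union_left]
      exact ⟨σ.disjoint hB hD (Ne.symm hDB), σ.disjoint hC hD (Ne.symm hDC)⟩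
  sup_parts := by
    have h := σ.sup_parts
    rw [parts_eq_insert hB hC hBC, sup_insert, sup_insert] at h
    simp only [id_eq] at h ⊢
    rw [sup_insert]
    simp only [id_eq]
    rw [← sup_eq_union, sup_assoc]
    exact h
  bot_notMem := by
    simp only [bot_eq_empty, mem_insert]
    rintro (h | h)
    · obtain ⟨x, hx⟩ := σ.nonempty_of_mem_parts hB
      have hx' : x ∈ B ∪ C := mem_union_left _ hx
      rw [← h] at hx'
      exact notMem_empty x hx'
    · exact σ.bot_notMem (mem_of_mem_erase (mem_of_mem_erase h))

lemma mem_mergeP (hB : B ∈ σ.parts) (hC : C ∈ σ.parts) (hBC : B ≠ C) {D : Finset (Fin n)} :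
    D ∈ (mergeNCP σ B C hB hC hBC).parts ↔
      D = B ∪ C ∨ (D ∈ σ.parts ∧ D ≠ B ∧ D ≠ C) := by
  simp only [mergeNCP, mem_insert, mem_erase]
  tauto

lemma mergeP_card (hB : B ∈ σ.parts) (hC : C ∈ σ.parts) (hBC : B ≠ C) :
    (mergeNCP σ B C hB hC hBC).parts.card + 1 = σ.parts.card := by
  have h1 : (mergeNCP σ B C hB hC hBC).parts.card =
      ((σ.parts.erase B).erase C).card + 1 := by
    simp only [mergeNCP]
    rw [card_insert_of_notMem (union_not_mem_erase hB hC hBC)]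
  rw [h1, card_erase_of_mem (mem_erase.2 ⟨Ne.symm hBC, hC⟩), card_erase_of_mem hB]
  have : 2 ≤ σ.parts.card := one_lt_card.2 ⟨B, hB, C, hC, hBC⟩
  omega

lemma sameBlock_merge (hB : B ∈ σ.parts) (hC : C ∈ σ.parts) (hBC : B ≠ C) {x y : Fin n} :
    sameBlock (mergeNCP σ B C hB hC hBC) x y ↔
      sameBlock σ x y ∨ (x ∈ B ∪ C ∧ y ∈ B ∪ C) := by
  constructor
  · rintro ⟨D, hD, hx, hy⟩
    rcases (mem_mergeP hB hC hBC).1 hD with rfl | ⟨hD, -, -⟩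
    · exact .inr ⟨hx, hy⟩
    · exact .inl ⟨D, hD, hx, hy⟩
  · rintro (⟨D, hD, hx, hy⟩ | ⟨hx, hy⟩)
    · by_cases hDB : D = B
      · exact ⟨B ∪ C, (mem_mergeP hB hC hBC).2 (.inl rfl),
          mem_union_left _ (hDB ▸ hx), mem_union_left _ (hDB ▸ hy)⟩
      by_cases hDC : D = C
      · exact ⟨B ∪ C, (mem_mergeP hB hC hBC).2 (.inl rfl),
          mem_union_right _ (hDC ▸ hx), mem_union_right _ (hDC ▸ hy)⟩
      · exact ⟨D, (mem_mergeP hB hC hBC).2 (.inr ⟨hD, hDB, hDC⟩), hx, hy⟩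
    · exact ⟨B ∪ C, (mem_mergeP hB hC hBC).2 (.inl rfl), hx, hy⟩

end Merge

lemma val_add_one {n : ℕ} [NeZero n] (m : Fin n) :
    (((m + 1 : Fin n)) : ℕ) = (m : ℕ) + 1 ∧ (m : ℕ) + 1 < n ∨
      (((m + 1 : Fin n)) : ℕ) = 0 ∧ (m : ℕ) + 1 = n := by
  have h := m.isLt
  have key : (((m + 1 : Fin n)) : ℕ) = ((m : ℕ) + 1) % n := by
    rw [Fin.add_def, Fin.val_one']
    conv_rhs => rw [Nat.add_mod, Nat.mod_eq_of_lt h]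
  rcases Nat.lt_or_ge ((m : ℕ) + 1) n with h1 | h1
  · exact .inl ⟨by rw [key, Nat.mod_eq_of_lt h1], h1⟩
  · have h2 : (m : ℕ) + 1 = n := by omega
    exact .inr ⟨by rw [key, h2, Nat.mod_self], h2⟩

lemma val_ne_of_ne {n : ℕ} {a b : Fin n} (h : a ≠ b) : (a : ℕ) ≠ (b : ℕ) :=
  fun h' => h (Fin.ext h')

lemma mem_cIoc_add_one {n : ℕ} [NeZero n] {j k m : Fin n} (hj : j ≠ m) (hk : k ≠ m) :
    m ∈ cIoc j k ↔ m + 1 ∈ cIoc j k := by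
  have hj' := val_ne_of_ne hj
  have hk' := val_ne_of_ne hk
  have h1 := j.isLt
  have h2 := k.isLt
  have h3 := m.isLt
  rw [mem_cIoc', mem_cIoc']
  rcases val_add_one m with ⟨e, he⟩ | ⟨e, he⟩ <;> rw [e] <;> omega

lemma add_one_mem_cIoc {n : ℕ} [NeZero n] {m j : Fin n} (h : j ≠ m) : m + 1 ∈ cIoc m j := by
  have h' := val_ne_of_ne h
  have h1 := j.isLt
  have h3 := m.isLt
  rw [mem_cIoc']
  rcases val_add_one m with ⟨e, he⟩ | ⟨e, he⟩ <;> rw [e] <;> omega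

lemma self_mem_cIoc {n : ℕ} (j i : Fin n) : i ∈ cIoc j i := by
  rw [mem_cIoc']
  have h1 := j.isLt
  have h2 := i.isLt
  omega

lemma not_self_mem_cIoc {n : ℕ} {a b : Fin n} (h : b ≠ a) : a ∉ cIoc a b := by
  have h' := val_ne_of_ne h
  rw [mem_cIoc']
  omega

lemma block_ne_imp {σ : NCP n} {D E : Finset (Fin n)} (hD : D ∈ σ.parts) (hE : E ∈ σ.parts)
    (hne : D ≠ E) {x y : Fin n} (hx : x ∈ D) (hy : y ∈ E) : ¬ sameBlock σ x y := by
  rintro ⟨F, hF, hxF, hyF⟩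
  exact hne ((σ.eq_of_mem_parts hD hF hx hxF).trans (σ.eq_of_mem_parts hF hE hyF hy))

lemma mem_ne_of_blocks {σ : NCP n} {D E : Finset (Fin n)} (hD : D ∈ σ.parts)
    (hE : E ∈ σ.parts) (hne : D ≠ E) {x y : Fin n} (hx : x ∈ D) (hy : y ∈ E) : x ≠ y := by
  rintro rfl
  exact hne (σ.eq_of_mem_parts hD hE hx hy)

section MergeFacts
variable [NeZero n] {σ : NCP n} {B C : Finset (Fin n)}

lemma merge_noncross (hσ : IsNoncrossing σ) (hB : B ∈ σ.parts) (hC : C ∈ σ.parts)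
    (hBC : B ≠ C) {m : Fin n} (hm : m ∈ B) (hm1 : m + 1 ∈ C) :
    IsNoncrossing (mergeNCP σ B C hB hC hBC) := by
  intro a b c d hab hbc hcd hac hbd
  rw [sameBlock_merge] at hac hbd ⊢
  have hab' : (a:ℕ) < b := hab
  have hbc' : (b:ℕ) < c := hbc
  have hcd' : (c:ℕ) < d := hcd
  have hdlt := d.isLt
  have hmlt := m.isLt
  rcases hac with hac | ⟨haU, hcU⟩
  · obtain ⟨E, hE, haE, hcE⟩ := hac
    rcases hbd with hbd | ⟨hbU, hdU⟩
    · exact .inl (hσ a b c d hab hbc hcd ⟨E, hE, haE, hcE⟩ hbd)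
    by_cases hEB : E = B
    · exact .inr ⟨mem_union_left _ (hEB ▸ haE), hbU⟩
    by_cases hEC : E = C
    · exact .inr ⟨mem_union_right _ (hEC ▸ haE), hbU⟩
    rcases mem_union.1 hbU with hb | hb <;> rcases mem_union.1 hdU with hd | hd
    · exact .inl (hσ a b c d hab hbc hcd ⟨E, hE, haE, hcE⟩ ⟨B, hB, hb, hd⟩)
    · -- b ∈ B, d ∈ C
      exfalso
      have hma : (m:ℕ) ≠ a := val_ne_of_ne (mem_ne_of_blocks hB hE (Ne.symm hEB) hm haE)
      have hmc : (m:ℕ) ≠ c := val_ne_of_ne (mem_ne_of_blocks hB hE (Ne.symm hEB) hm hcE)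
      have hmd : (m:ℕ) ≠ d := val_ne_of_ne (mem_ne_of_blocks hB hC hBC hm hd)
      have hmain : (a:ℕ) < m ∧ (m:ℕ) < c := by
        by_cases hmb : (m:ℕ) = b
        · omega
        have H : (m:ℕ) < a ∨ ((a:ℕ) < m ∧ (m:ℕ) < c) ∨ (c:ℕ) < m := by omega
        rcases H with H | H | H
        · exact (noCross4 hσ ⟨B, hB, hm, hb⟩ ⟨E, hE, haE, hcE⟩
            (block_ne_imp hB hE (Ne.symm hEB) hm haE) (.inl ⟨H, hab, hbc⟩)).elim
        · exact H
        · exact (noCross4 hσ ⟨E, hE, haE, hcE⟩ ⟨B, hB, hb, hm⟩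
            (block_ne_imp hE hB hEB haE hb) (.inl ⟨hab, hbc, H⟩)).elim
      have hm1c : ((m+1 : Fin n):ℕ) ≠ c :=
        val_ne_of_ne (mem_ne_of_blocks hC hE (Ne.symm hEC) hm1 hcE)
      rcases val_add_one m with ⟨e, he⟩ | ⟨e, he⟩
      · exact noCross4 hσ ⟨E, hE, haE, hcE⟩ ⟨C, hC, hm1, hd⟩
          (block_ne_imp hE hC hEC haE hm1)
          (.inl ⟨show (a:ℕ) < ((m+1:Fin n):ℕ) by omega,
                 show ((m+1:Fin n):ℕ) < c by omega, hcd⟩)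
      · omega
    · -- b ∈ C, d ∈ B
      exfalso
      have hma : (m:ℕ) ≠ a := val_ne_of_ne (mem_ne_of_blocks hB hE (Ne.symm hEB) hm haE)
      have hmc : (m:ℕ) ≠ c := val_ne_of_ne (mem_ne_of_blocks hB hE (Ne.symm hEB) hm hcE)
      have hmb : (m:ℕ) ≠ b := val_ne_of_ne (mem_ne_of_blocks hB hC hBC hm hb)
      have hm1a : ((m+1 : Fin n):ℕ) ≠ a :=
        val_ne_of_ne (mem_ne_of_blocks hC hE (Ne.symm hEC) hm1 haE)
      have hmain : (m:ℕ) < a ∨ (c:ℕ) < m := by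
        by_cases hmd : (m:ℕ) = d
        · omega
        have H : (m:ℕ) < a ∨ ((a:ℕ) < m ∧ (m:ℕ) < c) ∨ (c:ℕ) < m := by omega
        rcases H with H | H | H
        · exact .inl H
        · exact (noCross4 hσ ⟨B, hB, hm, hd⟩ ⟨E, hE, hcE, haE⟩
            (block_ne_imp hB hE (Ne.symm hEB) hm hcE)
            (.inr (.inr (.inr ⟨H.1, H.2, hcd⟩)))).elim
        · exact .inr H
      rcases val_add_one m with ⟨e, he⟩ | ⟨e, he⟩
      · rcases hmain with H | H
        · exact noCross4 hσ ⟨C, hC, hm1, hb⟩ ⟨E, hE, haE, hcE⟩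
            (block_ne_imp hC hE (Ne.symm hEC) hm1 haE)
            (.inl ⟨show ((m+1:Fin n):ℕ) < a by omega, hab, hbc⟩)
        · exact noCross4 hσ ⟨E, hE, haE, hcE⟩ ⟨C, hC, hb, hm1⟩
            (block_ne_imp hE hC hEC haE hb)
            (.inl ⟨hab, hbc, show (c:ℕ) < ((m+1:Fin n):ℕ) by omega⟩)
      · rcases hmain with H | H
        · omega
        · exact noCross4 hσ ⟨C, hC, hm1, hb⟩ ⟨E, hE, haE, hcE⟩
            (block_ne_imp hC hE (Ne.symm hEC) hm1 haE)
            (.inl ⟨show ((m+1:Fin n):ℕ) < a by omega, hab, hbc⟩)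
    · exact .inl (hσ a b c d hab hbc hcd ⟨E, hE, haE, hcE⟩ ⟨C, hC, hb, hd⟩)
  · rcases hbd with hbd | ⟨hbU, hdU⟩
    · obtain ⟨D, hD, hbD, hdD⟩ := hbd
      by_cases hDB : D = B
      · exact .inr ⟨haU, mem_union_left _ (hDB ▸ hbD)⟩
      by_cases hDC : D = C
      · exact .inr ⟨haU, mem_union_right _ (hDC ▸ hbD)⟩
      rcases mem_union.1 haU with ha | ha <;> rcases mem_union.1 hcU with hc | hc
      · exact .inl (hσ a b c d hab hbc hcd ⟨B, hB, ha, hc⟩ ⟨D, hD, hbD, hdD⟩)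
      · -- a ∈ B, c ∈ C
        exfalso
        have hmb : (m:ℕ) ≠ b := val_ne_of_ne (mem_ne_of_blocks hB hD (Ne.symm hDB) hm hbD)
        have hmd : (m:ℕ) ≠ d := val_ne_of_ne (mem_ne_of_blocks hB hD (Ne.symm hDB) hm hdD)
        have hm1b : ((m+1 : Fin n):ℕ) ≠ b :=
          val_ne_of_ne (mem_ne_of_blocks hC hD (Ne.symm hDC) hm1 hbD)
        have hm1d : ((m+1 : Fin n):ℕ) ≠ d :=
          val_ne_of_ne (mem_ne_of_blocks hC hD (Ne.symm hDC) hm1 hdD)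
        have hmain : (m:ℕ) < b ∨ (d:ℕ) < m := by
          have H : (m:ℕ) < b ∨ ((b:ℕ) < m ∧ (m:ℕ) < d) ∨ (d:ℕ) < m := by omega
          rcases H with H | H | H
          · exact .inl H
          · exact (noCross4 hσ ⟨B, hB, ha, hm⟩ ⟨D, hD, hbD, hdD⟩
              (block_ne_imp hB hD (Ne.symm hDB) ha hbD)
              (.inl ⟨hab, H.1, H.2⟩)).elim
          · exact .inr H
        rcases val_add_one m with ⟨e, he⟩ | ⟨e, he⟩
        · rcases hmain with H | H
          · exact noCross4 hσ ⟨C, hC, hm1, hc⟩ ⟨D, hD, hbD, hdD⟩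
              (block_ne_imp hC hD (Ne.symm hDC) hm1 hbD)
              (.inl ⟨show ((m+1:Fin n):ℕ) < b by omega, hbc, hcd⟩)
          · exact noCross4 hσ ⟨D, hD, hbD, hdD⟩ ⟨C, hC, hc, hm1⟩
              (block_ne_imp hD hC hDC hbD hc)
              (.inl ⟨hbc, hcd, show (d:ℕ) < ((m+1:Fin n):ℕ) by omega⟩)
        · rcases hmain with H | H
          · omega
          · exact noCross4 hσ ⟨C, hC, hm1, hc⟩ ⟨D, hD, hbD, hdD⟩
              (block_ne_imp hC hD (Ne.symm hDC) hm1 hbD)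
              (.inl ⟨show ((m+1:Fin n):ℕ) < b by omega, hbc, hcd⟩)
      · -- a ∈ C, c ∈ B
        exfalso
        have hmb : (m:ℕ) ≠ b := val_ne_of_ne (mem_ne_of_blocks hB hD (Ne.symm hDB) hm hbD)
        have hmd : (m:ℕ) ≠ d := val_ne_of_ne (mem_ne_of_blocks hB hD (Ne.symm hDB) hm hdD)
        have hm1d : ((m+1 : Fin n):ℕ) ≠ d :=
          val_ne_of_ne (mem_ne_of_blocks hC hD (Ne.symm hDC) hm1 hdD)
        have hmain : (b:ℕ) < m ∧ (m:ℕ) < d := by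
          by_cases hmc : (m:ℕ) = c
          · omega
          have H : (m:ℕ) < b ∨ ((b:ℕ) < m ∧ (m:ℕ) < d) ∨ (d:ℕ) < m := by omega
          rcases H with H | H | H
          · exact (noCross4 hσ ⟨B, hB, hm, hc⟩ ⟨D, hD, hbD, hdD⟩
              (block_ne_imp hB hD (Ne.symm hDB) hm hbD)
              (.inl ⟨H, hbc, hcd⟩)).elim
          · exact H
          · exact (noCross4 hσ ⟨D, hD, hbD, hdD⟩ ⟨B, hB, hc, hm⟩
              (block_ne_imp hD hB hDB hbD hc)
              (.inl ⟨hbc, hcd, H⟩)).elim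
        rcases val_add_one m with ⟨e, he⟩ | ⟨e, he⟩
        · exact noCross4 hσ ⟨C, hC, ha, hm1⟩ ⟨D, hD, hbD, hdD⟩
            (block_ne_imp hC hD (Ne.symm hDC) ha hbD)
            (.inl ⟨hab, show (b:ℕ) < ((m+1:Fin n):ℕ) by omega,
                   show ((m+1:Fin n):ℕ) < d by omega⟩)
        · omega
      · exact .inl (hσ a b c d hab hbc hcd ⟨C, hC, ha, hc⟩ ⟨D, hD, hbD, hdD⟩)
    · exact .inr ⟨haU, hbU⟩

end MergeFacts

lemma mem_cIoc_compl {j k x : Fin n} (h : j ≠ k) : x ∈ cIoc k j ↔ x ∉ cIoc j k := by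
  have h' := val_ne_of_ne h
  have h1 := j.isLt
  have h2 := k.isLt
  have h3 := x.isLt
  rw [mem_cIoc', mem_cIoc']
  omega

section MergeDual
variable [NeZero n] {σ : NCP n} {B C : Finset (Fin n)}

lemma eq_of_mem_cIoc_succ {m z : Fin n} (h : z ∈ cIoc m (m + 1)) : z = m + 1 := by
  rw [mem_cIoc'] at h
  have h1 := m.isLt
  have h2 := z.isLt
  rcases val_add_one m with ⟨e, he⟩ | ⟨e, he⟩ <;> (apply Fin.ext; omega)

lemma dualRel_merge (hσ : IsNoncrossing σ) (hB : B ∈ σ.parts) (hC : C ∈ σ.parts)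
    (hBC : B ≠ C) {m : Fin n} (hm : m ∈ B) (hm1 : m + 1 ∈ C) {j k : Fin n}
    (hj : j ≠ m) (hk : k ≠ m) :
    dualRel (mergeNCP σ B C hB hC hBC) j k ↔ dualRel σ j k := by
  by_cases hjk : j = k
  · simp [dualRel, hjk]
  unfold dualRel
  constructor
  · rintro (h | h)
    · exact .inl h
    right
    rintro ⟨E, hE, h1, h2⟩
    by_cases hEB : E = B
    · exact h ⟨B ∪ C, (mem_mergeP hB hC hBC).2 (.inl rfl),
        h1.mono (inter_subset_inter (hEB ▸ subset_union_left) le_rfl),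
        h2.mono (inter_subset_inter (hEB ▸ subset_union_left) le_rfl)⟩
    by_cases hEC : E = C
    · exact h ⟨B ∪ C, (mem_mergeP hB hC hBC).2 (.inl rfl),
        h1.mono (inter_subset_inter (hEC ▸ subset_union_right) le_rfl),
        h2.mono (inter_subset_inter (hEC ▸ subset_union_right) le_rfl)⟩
    · exact h ⟨E, (mem_mergeP hB hC hBC).2 (.inr ⟨hE, hEB, hEC⟩), h1, h2⟩
  · rintro (h | h)
    · exact .inl h
    right
    rintro ⟨D, hD, ⟨x, hx⟩, ⟨y, hy⟩⟩
    rw [mem_inter] at hx hy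
    obtain ⟨hxD, hxjk⟩ := hx
    obtain ⟨hyD, hykj⟩ := hy
    rcases (mem_mergeP hB hC hBC).1 hD with rfl | ⟨hD', -, -⟩
    swap
    · exact h ⟨D, hD', ⟨x, mem_inter.2 ⟨hxD, hxjk⟩⟩, ⟨y, mem_inter.2 ⟨hyD, hykj⟩⟩⟩
    have hBside : ∀ z ∈ B, z ∈ cIoc j k → m ∈ cIoc j k := by
      intro z hz hz'
      by_contra hmjk
      exact h ⟨B, hB, ⟨z, mem_inter.2 ⟨hz, hz'⟩⟩,
        ⟨m, mem_inter.2 ⟨hm, (mem_cIoc_compl hjk).2 hmjk⟩⟩⟩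
    have hCside : ∀ z ∈ C, z ∈ cIoc j k → m + 1 ∈ cIoc j k := by
      intro z hz hz'
      by_contra hmjk
      exact h ⟨C, hC, ⟨z, mem_inter.2 ⟨hz, hz'⟩⟩,
        ⟨m + 1, mem_inter.2 ⟨hm1, (mem_cIoc_compl hjk).2 hmjk⟩⟩⟩
    rcases mem_union.1 hxD with hx | hx <;> rcases mem_union.1 hyD with hy | hy
    · exact h ⟨B, hB, ⟨x, mem_inter.2 ⟨hx, hxjk⟩⟩, ⟨y, mem_inter.2 ⟨hy, hykj⟩⟩⟩
    · -- x ∈ B, y ∈ C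
      have hmjk : m ∈ cIoc j k := hBside x hx hxjk
      have : m + 1 ∈ cIoc j k := (mem_cIoc_add_one hj hk).1 hmjk
      exact h ⟨C, hC, ⟨m + 1, mem_inter.2 ⟨hm1, this⟩⟩, ⟨y, mem_inter.2 ⟨hy, hykj⟩⟩⟩
    · -- x ∈ C, y ∈ B
      have hm1jk : m + 1 ∈ cIoc j k := hCside x hx hxjk
      have : m ∈ cIoc j k := (mem_cIoc_add_one hj hk).2 hm1jk
      exact h ⟨B, hB, ⟨m, mem_inter.2 ⟨hm, this⟩⟩, ⟨y, mem_inter.2 ⟨hy, hykj⟩⟩⟩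
    · exact h ⟨C, hC, ⟨x, mem_inter.2 ⟨hx, hxjk⟩⟩, ⟨y, mem_inter.2 ⟨hy, hykj⟩⟩⟩

lemma merge_singleton_class (hB : B ∈ σ.parts) (hC : C ∈ σ.parts) (hBC : B ≠ C)
    {m : Fin n} (hm : m ∈ B) (hm1 : m + 1 ∈ C) {j : Fin n} (hj : j ≠ m) :
    ¬ dualRel (mergeNCP σ B C hB hC hBC) m j := by
  rintro (h | h)
  · exact hj h.symm
  exact h ⟨B ∪ C, (mem_mergeP hB hC hBC).2 (.inl rfl),
    ⟨m + 1, mem_inter.2 ⟨mem_union_right _ hm1, add_one_mem_cIoc hj⟩⟩,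
    ⟨m, mem_inter.2 ⟨mem_union_left _ hm, self_mem_cIoc j m⟩⟩⟩

lemma exists_dual_partner (hσ : IsNoncrossing σ) (hB : B ∈ σ.parts) (hC : C ∈ σ.parts)
    (hBC : B ≠ C) {m : Fin n} (hm : m ∈ B) (hm1 : m + 1 ∈ C) :
    ∃ j : Fin n, j ≠ m ∧ dualRel σ m j := by
  obtain ⟨j₀, hj₀C, hmax⟩ := C.exists_max_image
    (fun x => if (m:ℕ) < (x:ℕ) then (x:ℕ) - (m:ℕ) else (x:ℕ) + n - (m:ℕ)) ⟨m+1, hm1⟩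
  have hj₀m : j₀ ≠ m := mem_ne_of_blocks hC hB hBC.symm hj₀C hm
  have hsub : ∀ z ∈ C, z ∈ cIoc m j₀ := by
    intro z hz
    have h1 := hmax z hz
    have hzm : (z:ℕ) ≠ m := val_ne_of_ne (mem_ne_of_blocks hC hB hBC.symm hz hm)
    have hj' : (j₀:ℕ) ≠ m := val_ne_of_ne hj₀m
    have h2 := z.isLt
    have h3 := j₀.isLt
    have h4 := m.isLt
    rw [mem_cIoc']
    split_ifs at h1 <;> omega
  refine ⟨j₀, hj₀m, .inr ?_⟩
  rintro ⟨E, hE, ⟨x, hx⟩, ⟨y, hy⟩⟩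
  rw [mem_inter] at hx hy
  obtain ⟨hxE, hxI⟩ := hx
  obtain ⟨hyE, hyI⟩ := hy
  by_cases hm1j : m + 1 = j₀
  · -- then cIoc m j₀ = {m+1}
    have hxeq : x = m + 1 := eq_of_mem_cIoc_succ (hm1j ▸ hxI)
    by_cases hEC : E = C
    · -- y ∈ C ⊆ cIoc m j₀ but y ∈ cIoc j₀ m
      have := hsub y (hEC ▸ hyE)
      exact ((mem_cIoc_compl (Ne.symm hj₀m)).1 hyI) this
    · exact (mem_ne_of_blocks hE hC hEC hxE hm1) hxeq
  by_cases hEC : E = C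
  · have := hsub y (hEC ▸ hyE)
    exact ((mem_cIoc_compl (Ne.symm hj₀m)).1 hyI) this
  -- x ∈ E, x ∈ cIoc m j₀, x ≠ m+1, x ≠ j₀; y ∈ cIoc j₀ m
  have hxm1 : (x:ℕ) ≠ ((m+1 : Fin n):ℕ) := val_ne_of_ne (mem_ne_of_blocks hE hC hEC hxE hm1)
  have hxj₀ : (x:ℕ) ≠ (j₀:ℕ) := val_ne_of_ne (mem_ne_of_blocks hE hC hEC hxE hj₀C)
  have hj' : (j₀:ℕ) ≠ (m:ℕ) := val_ne_of_ne hj₀m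
  have hm1j' : ((m+1 : Fin n):ℕ) ≠ (j₀:ℕ) := val_ne_of_ne hm1j
  have h2 := x.isLt
  have h3 := j₀.isLt
  have h4 := m.isLt
  have h5 := y.isLt
  rw [mem_cIoc'] at hxI hyI
  by_cases hEB : E = B
  · -- pairs (m, x) ∈ B, (m+1, j₀) ∈ C
    exact noCross4 hσ ⟨B, hB, hm, hEB ▸ hxE⟩ ⟨C, hC, hm1, hj₀C⟩
      (block_ne_imp hB hC hBC hm hm1)
      (by simp only [Fin.lt_def]
          rcases val_add_one m with ⟨e, he⟩ | ⟨e, he⟩ <;> omega)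
  · -- pairs (m+1, j₀) ∈ C, (x, y) ∈ E
    have hym : (y:ℕ) ≠ (m:ℕ) := val_ne_of_ne (mem_ne_of_blocks hE hB hEB hyE hm)
    have hym1 : (y:ℕ) ≠ ((m+1 : Fin n):ℕ) :=
      val_ne_of_ne (mem_ne_of_blocks hE hC hEC hyE hm1)
    exact noCross4 hσ ⟨C, hC, hm1, hj₀C⟩ ⟨E, hE, hxE, hyE⟩
      (block_ne_imp hC hE (fun hh => hEC hh.symm) hm1 hxE)
      (by simp only [Fin.lt_def]
          rcases val_add_one m with ⟨e, he⟩ | ⟨e, he⟩ <;> omega)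

end MergeDual

def dclass {n : ℕ} (σ : NCP n) (i : Fin n) : Finset (Fin n) := univ.filter (dualRel σ i)

lemma mem_dclass {σ : NCP n} {i j : Fin n} : j ∈ dclass σ i ↔ dualRel σ i j := by
  simp [dclass]

lemma dclass_eq {σ : NCP n} {i j : Fin n} (h : dualRel σ i j) : dclass σ i = dclass σ j := by
  ext k
  rw [mem_dclass, mem_dclass]
  exact ⟨fun h' => dualRel_trans (dualRel_symm h) h', fun h' => dualRel_trans h h'⟩

section Count
variable [NeZero n] {σ : NCP n} {B C : Finset (Fin n)}

lemma classes_merge_card (hσ : IsNoncrossing σ) (hB : B ∈ σ.parts) (hC : C ∈ σ.parts)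
    (hBC : B ≠ C) {m : Fin n} (hm : m ∈ B) (hm1 : m + 1 ∈ C) :
    (univ.image (dclass (mergeNCP σ B C hB hC hBC))).card
      = (univ.image (dclass σ)).card + 1 := by
  obtain ⟨j₀, hj₀m, hmj₀⟩ := exists_dual_partner hσ hB hC hBC hm hm1
  set σ'' := mergeNCP σ B C hB hC hBC with hσ''
  set T := (univ.filter fun i => ¬ dualRel σ m i).image (dclass σ) with hT
  have hmemT : ∀ K, K ∈ T ↔ ∃ i, ¬ dualRel σ m i ∧ dclass σ i = K := by
    intro K
    simp only [hT, mem_image, mem_filter, mem_univ, true_and]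
  have hmT : ∀ K ∈ T, m ∉ K := by
    intro K hK
    obtain ⟨i, hi, rfl⟩ := (hmemT _).1 hK
    rw [mem_dclass]
    exact fun h => hi (dualRel_symm h)
  have h1 : univ.image (dclass σ) = insert (dclass σ m) T := by
    ext K
    simp only [mem_image, mem_univ, true_and, mem_insert]
    constructor
    · rintro ⟨i, rfl⟩
      by_cases h : dualRel σ m i
      · exact .inl (dclass_eq h).symm
      · exact .inr ((hmemT _).2 ⟨i, h, rfl⟩)
    · rintro (rfl | hK)
      · exact ⟨m, rfl⟩
      · obtain ⟨i, -, rfl⟩ := (hmemT _).1 hK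
        exact ⟨i, rfl⟩
  have h2 : dclass σ m ∉ T := fun h => hmT _ h (mem_dclass.2 (dualRel_refl σ m))
  have hGm : dclass σ'' m = {m} := by
    ext j
    rw [mem_dclass, mem_singleton]
    constructor
    · intro h
      by_contra hj
      exact merge_singleton_class hB hC hBC hm hm1
        (fun hh => hj hh) h
    · rintro rfl
      exact dualRel_refl _ j
  have hGnm : ∀ i, i ≠ m → ¬ dualRel σ m i → dclass σ'' i = dclass σ i := by
    intro i him hmi
    ext j
    rw [mem_dclass, mem_dclass]
    by_cases hjm : j = m
    · subst hjm
      constructor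
      · intro h
        exact ((merge_singleton_class hB hC hBC hm hm1 him) (dualRel_symm h)).elim
      · intro h
        exact (hmi (dualRel_symm h)).elim
    · exact dualRel_merge hσ hB hC hBC hm hm1 him hjm
  have hGm2 : ∀ i, i ≠ m → dualRel σ m i → dclass σ'' i = (dclass σ m).erase m := by
    intro i him hmi
    ext j
    rw [mem_dclass, mem_erase, mem_dclass]
    by_cases hjm : j = m
    · subst hjm
      constructor
      · intro h
        exact ((merge_singleton_class hB hC hBC hm hm1 him) (dualRel_symm h)).elim
      · rintro ⟨hne, -⟩
        exact (hne rfl).elim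
    · rw [dualRel_merge hσ hB hC hBC hm hm1 him hjm]
      constructor
      · intro h
        exact ⟨hjm, dualRel_trans hmi h⟩
      · rintro ⟨-, h⟩
        exact dualRel_trans (dualRel_symm hmi) h
  have h3 : univ.image (dclass σ'') = insert {m} (insert ((dclass σ m).erase m) T) := by
    ext K
    simp only [mem_image, mem_univ, true_and, mem_insert]
    constructor
    · rintro ⟨i, rfl⟩
      by_cases him : i = m
      · subst him
        exact .inl hGm
      by_cases hmi : dualRel σ m i
      · exact .inr (.inl (hGm2 i him hmi))
      · exact .inr (.inr ((hmemT _).2 ⟨i, hmi, (hGnm i him hmi).symm⟩))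
    · rintro (rfl | rfl | hK)
      · exact ⟨m, hGm⟩
      · exact ⟨j₀, hGm2 j₀ hj₀m hmj₀⟩
      · obtain ⟨i, hi, rfl⟩ := (hmemT _).1 hK
        have him : i ≠ m := fun hh => hi (hh ▸ dualRel_refl σ m)
        exact ⟨i, hGnm i him hi⟩
  have hj₀Fm : j₀ ∈ (dclass σ m).erase m := mem_erase.2 ⟨hj₀m, mem_dclass.2 hmj₀⟩
  have d1 : ({m} : Finset (Fin n)) ∉ insert ((dclass σ m).erase m) T := by
    simp only [mem_insert]
    rintro (h | h)
    · rw [← h] at hj₀Fm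
      exact hj₀m (mem_singleton.1 hj₀Fm)
    · exact hmT _ h (mem_singleton_self m)
  have d2 : (dclass σ m).erase m ∉ T := by
    intro h
    obtain ⟨i, hi, heq⟩ := (hmemT _).1 h
    rw [← heq] at hj₀Fm
    exact hi (dualRel_trans hmj₀ (dualRel_symm (mem_dclass.1 hj₀Fm)))
  rw [h3, h1, card_insert_of_notMem d1, card_insert_of_notMem d2, card_insert_of_notMem h2]

end Count

lemma parts_card_one_case {n : ℕ} (σ : NCP n) (h1 : σ.parts.card = 1) :
    σ.parts.card + (univ.image (dclass σ)).card = n + 1 := by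
  obtain ⟨P, hP⟩ := card_eq_one.1 h1
  have hPuniv : P = univ := by
    have h := σ.sup_parts
    rw [hP, sup_singleton] at h
    exact h
  have hclass : ∀ i : Fin n, dclass σ i = {i} := by
    intro i
    ext j
    rw [mem_dclass, mem_singleton]
    constructor
    · intro h
      rcases h with h | h
      · exact h.symm
      · by_contra hij
        exact h ⟨P, by rw [hP]; exact mem_singleton_self P,
          ⟨j, mem_inter.2 ⟨hPuniv ▸ mem_univ j, self_mem_cIoc i j⟩⟩,
          ⟨i, mem_inter.2 ⟨hPuniv ▸ mem_univ i, self_mem_cIoc j i⟩⟩⟩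
    · rintro rfl
      exact dualRel_refl σ j
  have himg : univ.image (dclass σ) = univ.image (fun i : Fin n => ({i} : Finset (Fin n))) :=
    image_congr (fun i _ => hclass i)
  rw [h1, himg, card_image_of_injective _ (fun a b h => singleton_injective h), card_univ,
    Fintype.card_fin]
  omega

lemma exists_cut {n : ℕ} [NeZero n] (σ : NCP n) (h2 : 2 ≤ σ.parts.card) :
    ∃ m : Fin n, ¬ sameBlock σ m (m + 1) := by
  by_contra h
  push_neg at h
  have h0 : ∀ v : ℕ, ∀ hv : v < n, sameBlock σ 0 ⟨v, hv⟩ := by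
    intro v
    induction v with
    | zero =>
      intro hv
      have : (0 : Fin n) = ⟨0, hv⟩ := by
        apply Fin.ext
        simp
      rw [← this]
      exact sameBlock_refl σ 0
    | succ v ih =>
      intro hv
      have hv' : v < n := by omega
      have step := h ⟨v, hv'⟩
      have heq : ((⟨v, hv'⟩ : Fin n) + 1) = ⟨v + 1, hv⟩ := by
        apply Fin.ext
        rcases val_add_one (⟨v, hv'⟩ : Fin n) with ⟨e, he⟩ | ⟨e, he⟩ <;>
          simp only [Fin.val_mk] at e he ⊢ <;> omega
      rw [heq] at step
      exact sameBlock_trans (ih hv') step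
  obtain ⟨B₀, hB₀, h0B⟩ := σ.exists_mem (mem_univ (0 : Fin n))
  have hall : ∀ j : Fin n, j ∈ B₀ := by
    intro j
    have hj := h0 j.val j.isLt
    have hj' : sameBlock σ 0 j := by
      have : (⟨j.val, j.isLt⟩ : Fin n) = j := Fin.eta j j.isLt
      rwa [this] at hj
    exact mem_of_sameBlock hB₀ h0B hj'
  have hsing : σ.parts = {B₀} := by
    apply eq_singleton_iff_unique_mem.2 ⟨hB₀, ?_⟩
    intro Q hQ
    obtain ⟨z, hz⟩ := σ.nonempty_of_mem_parts hQ
    exact σ.eq_of_mem_parts hQ hB₀ hz (hall z)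
  rw [hsing] at h2
  simp at h2

lemma count_all {n : ℕ} (hn : 0 < n) : ∀ N (σ : NCP n), IsNoncrossing σ → σ.parts.card ≤ N →
    σ.parts.card + (univ.image (dclass σ)).card = n + 1 := by
  have hNZ : NeZero n := ⟨hn.ne'⟩
  have hne : Nonempty (Fin n) := ⟨⟨0, hn⟩⟩
  have huniv : (univ : Finset (Fin n)) ≠ ⊥ := by
    rw [bot_eq_empty]
    exact (univ_nonempty).ne_empty
  intro N
  induction N with
  | zero =>
    intro σ hσ hcard
    have := card_pos.2 (σ.parts_nonempty huniv)
    omega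
  | succ N ih =>
    intro σ hσ hcard
    by_cases hle : σ.parts.card ≤ N
    · exact ih σ hσ hle
    by_cases h1 : σ.parts.card = 1
    · exact parts_card_one_case σ h1
    have h2 : 2 ≤ σ.parts.card := by
      have := card_pos.2 (σ.parts_nonempty huniv)
      omega
    obtain ⟨m, hcut⟩ := exists_cut σ h2
    obtain ⟨B, hB, hmB⟩ := σ.exists_mem (mem_univ m)
    obtain ⟨C, hC, hm1C⟩ := σ.exists_mem (mem_univ (m + 1))
    have hBC : B ≠ C := fun h => hcut ⟨B, hB, hmB, h ▸ hm1C⟩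
    have key1 := mergeP_card hB hC hBC
    have key2 := classes_merge_card hσ hB hC hBC hmB hm1C
    have key3 := ih (mergeNCP σ B C hB hC hBC) (merge_noncross hσ hB hC hBC hmB hm1C)
      (by omega)
    omega


theorem stmt0 (n : ℕ) (hn : 0 < n) (σ : NCP n) (hσ : IsNoncrossing σ) :
    Equivalence (dualRel σ) ∧
    (∀ a b c d : Fin n, a < b → b < c → c < d →
      dualRel σ a c → dualRel σ b d → dualRel σ a b) ∧
    σ.parts.card +
      ((univ : Finset (Fin n)).image fun i => (univ : Finset (Fin n)).filter (dualRel σ i)).card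
      = n + 1 := by
  refine ⟨⟨dualRel_refl σ, fun h => dualRel_symm h, fun h h' => dualRel_trans h h'⟩,
    fun a b c d h1 h2 h3 h4 h5 => dual_noncrossing h1 h2 h3 h4 h5, ?_⟩
  exact count_all hn σ.parts.card σ hσ le_rfl

end
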